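/- Let M ⊂ ℝⁿ be a helix hypersurface with respect to a fixed unit direction d, i.e. ⟨d, ξ⟩ is constant on M where ξ is a unit normal field. If α : I → M is a unit-speed geodesic of M with nonvanishing curvature in ℝⁿ, then α is a slant helix in ℝⁿ with axis d: the unit principal normal V₂ of α satisfies that ⟨V₂, d⟩ is constant along α. -/

import Mathlib

open scoped RealInnerProductSpace

/-- Let `M ⊂ ℝⁿ` be a helix hypersurface with respect to a fixed
unit direction `d` (i.e. `⟨d, ξ⟩` is constant on `M`, `ξ` a unit normal field),
and let `α : I → M` be a unit-speed geodesic (so `α'' = λ • ξ ∘ α`) with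
nonvanishing curvature. Then `α` is a slant helix with axis `d`: the inner
product of its unit principal normal `V₂ = α''/‖α''‖` with `d` is constant. -/
theorem geodesic_on_helix_hypersurface_is_slant_helix
    (n : ℕ) (M : Set (EuclideanSpace ℝ (Fin n)))
    (ξ : EuclideanSpace ℝ (Fin n) → EuclideanSpace ℝ (Fin n))
    (hξunit : ∀ p ∈ M, ‖ξ p‖ = 1)
    (d : EuclideanSpace ℝ (Fin n)) (hd : ‖d‖ = 1)
    (hhelix : ∃ c : ℝ, ∀ p ∈ M, ⟪d, ξ p⟫ = c)
    (I : Set ℝ) (hconn : IsPreconnected I)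
    (α : ℝ → EuclideanSpace ℝ (Fin n))
    (hαM : ∀ s ∈ I, α s ∈ M)
    (hunit : ∀ s ∈ I, ‖deriv α s‖ = 1)
    (lam : ℝ → ℝ) (hlamcont : ContinuousOn lam I)
    (hgeo : ∀ s ∈ I, deriv (deriv α) s = lam s • ξ (α s))
    (hκpos : ∀ s ∈ I, 0 < ‖deriv (deriv α) s‖) :
    ∃ c : ℝ, ∀ s ∈ I,
      ⟪‖deriv (deriv α) s‖⁻¹ • deriv (deriv α) s, d⟫ = c := by
  obtain ⟨c', hc'⟩ := hhelix
  -- norm of second derivative is |lam|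
  have hnorm : ∀ s ∈ I, ‖deriv (deriv α) s‖ = |lam s| := by
    intro s hs
    rw [hgeo s hs, norm_smul, hξunit (α s) (hαM s hs), mul_one, Real.norm_eq_abs]
  have hne : ∀ s ∈ I, lam s ≠ 0 := by
    intro s hs h0
    have := hκpos s hs
    rw [hnorm s hs, h0, abs_zero] at this
    exact lt_irrefl 0 this
  -- value of the inner product
  have hval : ∀ s ∈ I,
      ⟪‖deriv (deriv α) s‖⁻¹ • deriv (deriv α) s, d⟫ = (|lam s|⁻¹ * lam s) * c' := by
    intro s hs
    rw [hnorm s hs, hgeo s hs, real_inner_smul_left, real_inner_smul_left,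
      real_inner_comm, hc' (α s) (hαM s hs), mul_assoc]
  by_cases hI : I.Nonempty
  · obtain ⟨s₀, hs₀⟩ := hI
    refine ⟨(|lam s₀|⁻¹ * lam s₀) * c', fun s hs => ?_⟩
    rw [hval s hs]
    -- same sign
    have hsign : |lam s|⁻¹ * lam s = |lam s₀|⁻¹ * lam s₀ := by
      rcases lt_or_gt_of_ne (hne s hs) with h1 | h1 <;>
      rcases lt_or_gt_of_ne (hne s₀ hs₀) with h2 | h2
      · rw [abs_of_neg h1, abs_of_neg h2]
        field_simp
        rw [div_self (hne s hs), div_self (hne s₀ hs₀)]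
      · exfalso
        have : (0:ℝ) ∈ lam '' I := hconn.intermediate_value hs hs₀ hlamcont ⟨le_of_lt h1, le_of_lt h2⟩
        obtain ⟨t, ht, ht0⟩ := this
        exact hne t ht ht0
      · exfalso
        have : (0:ℝ) ∈ lam '' I := hconn.intermediate_value hs₀ hs hlamcont ⟨le_of_lt h2, le_of_lt h1⟩
        obtain ⟨t, ht, ht0⟩ := this
        exact hne t ht ht0
      · rw [abs_of_pos h1, abs_of_pos h2]
        field_simp
    rw [hsign]
  · exact ⟨0, fun s hs => absurd ⟨s, hs⟩ hI⟩
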